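/- Let I be an ideal of a binomial ring R. The quotient R/I carries a binomial structure via (r + I choose n) = (r choose n) + I if and only if (e choose n) ∈ I for every e ∈ I and every n > 0. -/

import Mathlib

namespace QuotBinomAux
open Polynomial Finset


private lemma smeval_ringHom {T S : Type*} [CommRing T] [CommRing S] (f : T →+* S)
    (p : ℤ[X]) (x : T) : f (p.smeval x) = p.smeval (f x) := by
  induction p using Polynomial.induction_on' with
  | add p q hp hq => rw [smeval_add, map_add, hp, hq, smeval_add]
  | monomial n a => rw [smeval_monomial, map_zsmul, map_pow, smeval_monomial]

private lemma coeff_pow' {T : Type*} [CommSemiring T] (p : T[X]) (m n : ℕ) :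
    (p ^ m).coeff n = ∑ q ∈ Finset.Nat.antidiagonalTuple m n, ∏ i, p.coeff (q i) := by
  induction m generalizing n with
  | zero =>
    cases n with
    | zero => simp [Finset.Nat.antidiagonalTuple_zero_zero]
    | succ n => simp [Finset.Nat.antidiagonalTuple_zero_succ, Polynomial.coeff_one]
  | succ m ih =>
    rw [pow_succ', coeff_mul]
    have : ∀ x : ℕ × ℕ, x ∈ antidiagonal n →
        p.coeff x.1 * (p ^ m).coeff x.2 =
          ∑ q ∈ Finset.Nat.antidiagonalTuple m x.2, p.coeff x.1 * ∏ i, p.coeff (q i) := by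
      intro x hx
      rw [ih, Finset.mul_sum]
    rw [Finset.sum_congr rfl this, Finset.sum_sigma']
    refine Finset.sum_nbij' (fun x => Fin.cons x.1.1 x.2)
      (fun (y : Fin (m+1) → ℕ) => ⟨(y 0, ∑ i : Fin m, y i.succ), Fin.tail y⟩) ?_ ?_ ?_ ?_ ?_
    · rintro ⟨⟨a, b⟩, q⟩ hx
      simp only [Finset.mem_sigma, Finset.HasAntidiagonal.mem_antidiagonal,
        Finset.Nat.mem_antidiagonalTuple] at hx ⊢
      rw [Fin.sum_cons, hx.2, hx.1]
    · intro y hy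
      simp only [Finset.Nat.mem_antidiagonalTuple] at hy
      simp only [Finset.mem_sigma, Finset.HasAntidiagonal.mem_antidiagonal, Finset.Nat.mem_antidiagonalTuple]
      exact ⟨by rw [← hy, Fin.sum_univ_succ], rfl⟩
    · rintro ⟨⟨a, b⟩, q⟩ hx
      simp only [Finset.mem_sigma, Finset.HasAntidiagonal.mem_antidiagonal,
        Finset.Nat.mem_antidiagonalTuple] at hx
      have h2 : ∑ i : Fin m, (Fin.cons a q : Fin (m+1) → ℕ) i.succ = b := by
        simpa using hx.2
      simp [Fin.cons_zero, Fin.tail_cons, h2]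
      exact hx.2
    · intro y hy
      simp [Fin.cons_self_tail]
    · rintro ⟨⟨a, b⟩, q⟩ hx
      simp [Fin.prod_univ_succ]


private lemma filter_adT_empty {m n : ℕ} (h : n < m) :
    (Finset.Nat.antidiagonalTuple m n).filter (fun q => ∀ i, 1 ≤ q i) = ∅ := by
  rw [Finset.filter_eq_empty_iff]
  intro q hq hcon
  rw [Finset.Nat.mem_antidiagonalTuple] at hq
  have : m ≤ n := by
    calc m = ∑ _i : Fin m, 1 := by simp
    _ ≤ ∑ i, q i := Finset.sum_le_sum (fun i _ => hcon i)
    _ = n := hq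
  omega

private lemma coeff_pow_sub_one (k m n : ℕ) :
    (((X + 1 : ℚ[X]) ^ k - 1) ^ m).coeff n =
      ∑ q ∈ (Finset.Nat.antidiagonalTuple m n).filter (fun q => ∀ i, 1 ≤ q i),
        ∏ i, (k.choose (q i) : ℚ) := by
  have hco : ∀ d : ℕ, ((X + 1 : ℚ[X]) ^ k - 1).coeff d
      = if d = 0 then 0 else (k.choose d : ℚ) := by
    intro d
    rw [coeff_sub, coeff_X_add_one_pow, coeff_one]
    rcases eq_or_ne d 0 with h | h <;> simp [h]
  rw [coeff_pow']
  rw [← Finset.sum_filter_of_ne (p := fun q : Fin m → ℕ => ∀ i, 1 ≤ q i)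
    (fun q _ hne i => ?_)]
  · refine Finset.sum_congr rfl fun q hq => Finset.prod_congr rfl fun i _ => ?_
    simp only [Finset.mem_filter] at hq
    rw [hco, if_neg (Nat.one_le_iff_ne_zero.mp (hq.2 i))]
  · by_contra h
    exact hne (Finset.prod_eq_zero (Finset.mem_univ i) (by rw [hco, if_pos (by omega)]))

private lemma star (j k n : ℕ) :
    ((j * k).choose n : ℚ) =
      ∑ m ∈ Finset.range (n + 1), (j.choose m : ℚ) *
        ∑ q ∈ (Finset.Nat.antidiagonalTuple m n).filter (fun q => ∀ i, 1 ≤ q i),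
          ∏ i, (k.choose (q i) : ℚ) := by
  have h1 : ((j * k).choose n : ℚ) = (((X + 1 : ℚ[X])) ^ (j * k)).coeff n :=
    (coeff_X_add_one_pow ℚ _ n).symm
  have h2 : ((X + 1 : ℚ[X])) ^ (j * k)
      = ∑ m ∈ Finset.range (j + 1),
          ((X + 1 : ℚ[X]) ^ k - 1) ^ m * ((j.choose m : ℚ[X])) := by
    rw [mul_comm j k, pow_mul]
    have : (X + 1 : ℚ[X]) ^ k = ((X + 1 : ℚ[X]) ^ k - 1) + 1 := by ring
    rw [this, add_pow]
    simp [one_pow]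
  rw [h1, h2, finset_sum_coeff]
  have h3 : ∀ m, (((X + 1 : ℚ[X]) ^ k - 1) ^ m * ((j.choose m : ℚ[X]))).coeff n
      = (j.choose m : ℚ) * ∑ q ∈ (Finset.Nat.antidiagonalTuple m n).filter
          (fun q => ∀ i, 1 ≤ q i), ∏ i, (k.choose (q i) : ℚ) := by
    intro m
    rw [← C_eq_natCast, coeff_mul_C, coeff_pow_sub_one, mul_comm]
  simp only [h3]
  set F := fun m => (j.choose m : ℚ) * ∑ q ∈ (Finset.Nat.antidiagonalTuple m n).filter
      (fun q => ∀ i, 1 ≤ q i), ∏ i, (k.choose (q i) : ℚ) with hF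
  have hj : ∀ m ∈ Finset.range (j + n + 2), m ∉ Finset.range (j + 1) → F m = 0 := by
    intro m _ hm
    rw [Finset.mem_range, not_lt] at hm
    simp [hF, Nat.choose_eq_zero_of_lt (by omega : j < m)]
  have hn : ∀ m ∈ Finset.range (j + n + 2), m ∉ Finset.range (n + 1) → F m = 0 := by
    intro m _ hm
    rw [Finset.mem_range, not_lt] at hm
    simp [hF, filter_adT_empty (by omega : n < m)]
  rw [Finset.sum_subset (Finset.range_subset_range.mpr (by omega : j + 1 ≤ j + n + 2)) hj,
    ← Finset.sum_subset (Finset.range_subset_range.mpr (by omega : n + 1 ≤ j + n + 2)) hn]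


noncomputable def rhsII {T : Type*} [CommRing T] [BinomialRing T] (a b : T) (n : ℕ) : T :=
  ∑ m ∈ Finset.range (n + 1), Ring.choose a m *
    ∑ q ∈ (Finset.Nat.antidiagonalTuple m n).filter (fun q => ∀ i, 1 ≤ q i),
      ∏ i, Ring.choose b (q i)

noncomputable def rhsU {T : Type*} [CommRing T] (a b : T) (n : ℕ) : T :=
  ∑ m ∈ Finset.range (n + 1),
    ∑ q ∈ (Finset.Nat.antidiagonalTuple m n).filter (fun q => ∀ i, 1 ≤ q i),
      ((n.factorial / m.factorial) * (n.factorial / ∏ i, (q i).factorial)) •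
        ((descPochhammer ℤ m).smeval a * ∏ i, (descPochhammer ℤ (q i)).smeval b)

def isU {T : Type*} [CommRing T] (a b : T) (n : ℕ) : Prop :=
  n.factorial • (descPochhammer ℤ n).smeval (a * b) = rhsU a b n

private lemma prod_nsmul {T : Type*} [CommMonoid T] {ι : Type*} (s : Finset ι)
    (c : ι → ℕ) (f : ι → T) [MulAction ℕ T] [IsScalarTower ℕ T T] [SMulCommClass ℕ T T] :
    ∏ i ∈ s, c i • f i = (∏ i ∈ s, c i) • ∏ i ∈ s, f i := by
  induction s using Finset.cons_induction_on with
  | empty => simp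
  | cons _ _ hj ih => rw [Finset.prod_cons, ih, smul_mul_smul_comm, ← Finset.prod_cons hj,
      ← Finset.prod_cons hj]

lemma lemB {T : Type*} [CommRing T] [BinomialRing T] (a b : T) (n : ℕ) :
    n.factorial • (n.factorial • rhsII a b n) = rhsU a b n := by
  rw [rhsII, rhsU, Finset.smul_sum, Finset.smul_sum]
  refine Finset.sum_congr rfl fun m hm => ?_
  rw [Finset.mul_sum, Finset.smul_sum, Finset.smul_sum]
  refine Finset.sum_congr rfl fun q hq => ?_
  rw [Finset.mem_range] at hm
  rw [Finset.mem_filter, Finset.Nat.mem_antidiagonalTuple] at hq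
  have hm' : m.factorial ∣ n.factorial := Nat.factorial_dvd_factorial (by omega)
  have hq' : (∏ i, (q i).factorial) ∣ n.factorial := by
    rw [← hq.1]
    exact Nat.prod_factorial_dvd_factorial_sum _ _
  have h1 : (descPochhammer ℤ m).smeval a = m.factorial • Ring.choose a m :=
    Ring.descPochhammer_eq_factorial_smul_choose a m
  have h2 : ∏ i, (descPochhammer ℤ (q i)).smeval b
      = (∏ i, (q i).factorial) • ∏ i, Ring.choose b (q i) := by
    rw [← prod_nsmul]
    exact Finset.prod_congr rfl fun i _ =>
      Ring.descPochhammer_eq_factorial_smul_choose b (q i)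
  rw [h1, h2, smul_mul_smul_comm, smul_smul, smul_smul]
  congr 1
  rw [mul_mul_mul_comm, Nat.div_mul_cancel hm', Nat.div_mul_cancel hq']

lemma rhsU_map {T S : Type*} [CommRing T] [CommRing S] (f : T →+* S) (a b : T) (n : ℕ) :
    f (rhsU a b n) = rhsU (f a) (f b) n := by
  simp only [rhsU, map_sum, map_nsmul, map_mul, map_prod, smeval_ringHom]

lemma isU_map {T S : Type*} [CommRing T] [CommRing S] (f : T →+* S) {a b : T} {n : ℕ}
    (hU : isU a b n) : isU (f a) (f b) n := by
  unfold isU at hU ⊢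
  have h := congrArg f hU
  rwa [map_nsmul, smeval_ringHom, map_mul, rhsU_map] at h

lemma isU_Q (j k n : ℕ) : isU (j : ℚ) (k : ℚ) n := by
  unfold isU
  have axQ : Ring.choose ((j : ℚ) * (k : ℚ)) n = rhsII (j : ℚ) (k : ℚ) n := by
    have h0 : ((j : ℚ) * (k : ℚ)) = ((j * k : ℕ) : ℚ) := by push_cast; ring
    rw [h0, Ring.choose_natCast, rhsII]
    simp only [Ring.choose_natCast]
    exact star j k n
  rw [Ring.descPochhammer_eq_factorial_smul_choose, axQ, lemB]

lemma isU_QX (k n : ℕ) : isU (X : ℚ[X]) ((k : ℕ) : ℚ[X]) n := by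
  unfold isU
  apply Polynomial.eq_of_infinite_eval_eq
  apply Set.Infinite.mono ?_ (Set.infinite_range_of_injective (Nat.cast_injective (R := ℚ)))
  rintro x ⟨j, rfl⟩
  simp only [Set.mem_setOf_eq]
  show (evalRingHom ((j : ℚ))) _ = (evalRingHom ((j : ℚ))) _
  rw [map_nsmul, smeval_ringHom, map_mul, rhsU_map]
  have hX : (evalRingHom ((j : ℚ))) X = ((j : ℚ)) := eval_X
  have hk : (evalRingHom ((j : ℚ))) ((k : ℕ) : ℚ[X]) = ((k : ℕ) : ℚ) := eval_natCast
  rw [hX, hk]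
  exact isU_Q j k n

lemma isU_QXY (n : ℕ) : isU (C X : (Polynomial ℚ)[X]) (X : (Polynomial ℚ)[X]) n := by
  unfold isU
  apply Polynomial.eq_of_infinite_eval_eq
  apply Set.Infinite.mono ?_ (Set.infinite_range_of_injective (Nat.cast_injective (R := ℚ[X])))
  rintro x ⟨k, rfl⟩
  simp only [Set.mem_setOf_eq]
  show (evalRingHom ((k : ℚ[X]))) _ = (evalRingHom ((k : ℚ[X]))) _
  rw [map_nsmul, smeval_ringHom, map_mul, rhsU_map]
  have hX : (evalRingHom ((k : ℚ[X]))) (C X) = (X : ℚ[X]) := eval_C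
  have hk : (evalRingHom ((k : ℚ[X]))) X = ((k : ℕ) : ℚ[X]) := eval_X
  rw [hX, hk]
  exact isU_QX k n

lemma isU_ZXY (n : ℕ) : isU (C X : (Polynomial ℤ)[X]) (X : (Polynomial ℤ)[X]) n := by
  have hg : Function.Injective (mapRingHom (mapRingHom (Int.castRingHom ℚ))) :=
    Polynomial.map_injective _ (Polynomial.map_injective _ Int.cast_injective)
  unfold isU
  apply hg
  rw [map_nsmul, smeval_ringHom, map_mul, rhsU_map]
  have h1 : (mapRingHom (mapRingHom (Int.castRingHom ℚ))) (C X) = (C X : (Polynomial ℚ)[X]) := by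
    rw [coe_mapRingHom, map_C, coe_mapRingHom, map_X]
  have h2 : (mapRingHom (mapRingHom (Int.castRingHom ℚ))) X = (X : (Polynomial ℚ)[X]) := by
    rw [coe_mapRingHom, map_X]
  rw [h1, h2]
  exact isU_QXY n

lemma isU_all {T : Type*} [CommRing T] (a b : T) (n : ℕ) : isU a b n := by
  have h := isU_map (eval₂RingHom (eval₂RingHom (Int.castRingHom T) a) b) (isU_ZXY n)
  have h1 : (eval₂RingHom (eval₂RingHom (Int.castRingHom T) a) b) (C X) = a := by
    rw [coe_eval₂RingHom, eval₂_C, coe_eval₂RingHom, eval₂_X]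
  have h2 : (eval₂RingHom (eval₂RingHom (Int.castRingHom T) a) b) X = b := by
    rw [coe_eval₂RingHom, eval₂_X]
  rwa [h1, h2] at h

lemma axII {T : Type*} [CommRing T] [BinomialRing T] (a b : T) (n : ℕ) :
    Ring.choose (a * b) n = rhsII a b n := by
  haveI := BinomialRing.toIsAddTorsionFree (R := T)
  refine nsmul_right_injective (Nat.factorial_ne_zero n) ?_
  simp only
  refine nsmul_right_injective (Nat.factorial_ne_zero n) ?_
  simp only
  rw [lemB, ← Ring.descPochhammer_eq_factorial_smul_choose]
  exact isU_all a b n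

private lemma natIII (m n k : ℕ) (hk : k ≤ n) :
    (m + k).choose m * m.choose (n - k) = (m + k).choose n * n.choose k := by
  rcases le_or_gt n (m + k) with h | h
  · rw [Nat.choose_mul (n := m + k) hk, Nat.add_sub_cancel, Nat.choose_symm_add]
  · rw [Nat.choose_eq_zero_of_lt h, Nat.choose_eq_zero_of_lt (by omega : m < n - k),
      mul_zero, zero_mul]

lemma axIII {T : Type*} [CommRing T] [BinomialRing T] (a : T) (m n : ℕ) :
    Ring.choose a m * Ring.choose a n =
      ∑ k ∈ Finset.range (n + 1),
        Ring.choose a (m + k) * (((m + k).choose n : T)) * ((n.choose k : T)) := by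
  have ha : Ring.choose a n
      = ∑ ij ∈ antidiagonal n, Ring.choose (a - (m : T)) ij.1 * ((m.choose ij.2 : T)) := by
    have h := Ring.add_choose_eq (r := a - (m : T)) (s := (m : T)) n (Commute.all _ _)
    rw [sub_add_cancel] at h
    simp only [Ring.choose_natCast] at h
    exact h
  rw [ha, Finset.mul_sum]
  have hterm : ∀ ij ∈ antidiagonal n,
      Ring.choose a m * (Ring.choose (a - (m : T)) ij.1 * ((m.choose ij.2 : T)))
        = (((m + ij.1).choose m) * (m.choose ij.2)) • Ring.choose a (m + ij.1) := by
    intro ij _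
    have h := Ring.choose_smul_choose a (n := m + ij.1) (k := m) (Nat.le_add_right m ij.1)
    rw [Nat.add_sub_cancel_left] at h
    rw [← mul_assoc, ← h]
    simp only [nsmul_eq_mul, Nat.cast_mul]
    ring
  rw [Finset.sum_congr rfl hterm, Finset.Nat.sum_antidiagonal_eq_sum_range_succ_mk]
  refine Finset.sum_congr rfl fun k hk => ?_
  rw [Finset.mem_range] at hk
  rw [natIII m n k (by omega)]
  simp only [nsmul_eq_mul, Nat.cast_mul]
  ring

end QuotBinomAux
/-- A numerical ring (Ekedahl): a commutative unital ring with unary binomial coefficient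
operations satisfying axioms I–V. -/
structure NumericalRing (R : Type*) [CommRing R] where
  /-- The binomial coefficient operations `a ↦ (a choose n)`. -/
  choose : R → ℕ → R
  /-- Axiom I (Vandermonde): `(a+b choose n) = Σ_{p+q=n} (a choose p)(b choose q)`. -/
  axiom_I : ∀ a b : R, ∀ n : ℕ, choose (a + b) n =
    ∑ pq ∈ Finset.HasAntidiagonal.antidiagonal n, choose a pq.1 * choose b pq.2
  /-- Axiom II: `(ab choose n) = Σ_{m=0}^{n} (a choose m)
    Σ_{q_1+⋯+q_m=n, q_i ≥ 1} (b choose q_1)⋯(b choose q_m)`. -/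
  axiom_II : ∀ a b : R, ∀ n : ℕ, choose (a * b) n =
    ∑ m ∈ Finset.range (n + 1), choose a m *
      ∑ q ∈ (Finset.Nat.antidiagonalTuple m n).filter (fun q => ∀ i, 1 ≤ q i),
        ∏ i, choose b (q i)
  /-- Axiom III: `(a choose m)(a choose n) =
    Σ_{k=0}^{n} (a choose m+k)(m+k choose n)(n choose k)`. -/
  axiom_III : ∀ a : R, ∀ m n : ℕ, choose a m * choose a n =
    ∑ k ∈ Finset.range (n + 1), choose a (m + k) * ((m + k).choose n : R) * (n.choose k : R)
  /-- Axiom IV: `(1 choose n) = 0` for `n ≥ 2`. -/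
  axiom_IV : ∀ n : ℕ, 2 ≤ n → choose 1 n = 0
  /-- Axiom V: `(a choose 0) = 1`. -/
  axiom_V0 : ∀ a : R, choose a 0 = 1
  /-- Axiom V: `(a choose 1) = a`. -/
  axiom_V1 : ∀ a : R, choose a 1 = a

/-- For an ideal `I` of a binomial ring `R`, the quotient `R/I` carries a binomial
(numerical) structure via `(r + I choose n) = (r choose n) + I` if and only if
`(e choose n) ∈ I` for every `e ∈ I` and every `n > 0`. -/
theorem quotient_binomial_iff_binomial_ideal {R : Type*} [CommRing R] [BinomialRing R]
    (I : Ideal R) :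
    (∃ N : NumericalRing (R ⧸ I),
        ∀ (r : R) (n : ℕ),
          N.choose (Ideal.Quotient.mk I r) n = Ideal.Quotient.mk I (Ring.choose r n)) ↔
    (∀ e ∈ I, ∀ n : ℕ, 0 < n → Ring.choose e n ∈ I) := by
  constructor
  · rintro ⟨N, hN⟩ e he n hn
    have h0 : Ideal.Quotient.mk I e = Ideal.Quotient.mk I 0 := by
      rw [map_zero]
      exact Ideal.Quotient.eq_zero_iff_mem.mpr he
    rw [← Ideal.Quotient.eq_zero_iff_mem, ← hN e n, h0, hN 0 n, Ring.choose_zero_pos R hn,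
      map_zero]
  · intro hI
    have key : ∀ r s : R, r - s ∈ I → ∀ n : ℕ,
        Ideal.Quotient.mk I (Ring.choose r n) = Ideal.Quotient.mk I (Ring.choose s n) := by
      intro r s hrs n
      obtain ⟨e, he, rfl⟩ : ∃ e, e ∈ I ∧ r = s + e := ⟨r - s, hrs, by ring⟩
      rw [Ring.add_choose_eq n (Commute.all _ _), map_sum]
      rw [Finset.sum_eq_single (n, 0)]
      · rw [Ring.choose_zero_right, mul_one]
      · rintro ⟨i, j⟩ hmem hne
        rw [Finset.HasAntidiagonal.mem_antidiagonal] at hmem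
        have hj : 0 < j := by
          rcases Nat.eq_zero_or_pos j with h | h
          · exact absurd (by simp [h, ← hmem]) hne
          · exact h
        rw [map_mul, Ideal.Quotient.eq_zero_iff_mem.mpr (hI e he j hj), mul_zero]
      · intro h
        exact absurd (Finset.HasAntidiagonal.mem_antidiagonal.mpr (by simp)) h
    set mkI := Ideal.Quotient.mk I with hmkI
    have hsurj : Function.Surjective mkI := Ideal.Quotient.mk_surjective
    set σ : R ⧸ I → R := Function.surjInv hsurj with hσ
    have hσ2 : ∀ x, mkI (σ x) = x := fun x => Function.surjInv_eq hsurj x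
    have compat : ∀ (r : R) (n : ℕ), mkI (Ring.choose (σ (mkI r)) n) = mkI (Ring.choose r n) := by
      intro r n
      refine key _ _ (Ideal.Quotient.eq_zero_iff_mem.mp ?_) n
      rw [map_sub, hσ2, sub_self]
    refine ⟨⟨fun x n => mkI (Ring.choose (σ x) n), ?_, ?_, ?_, ?_, ?_, ?_⟩, fun r n => compat r n⟩
    · -- axiom I
      intro x y n
      obtain ⟨a, rfl⟩ := hsurj x
      obtain ⟨b, rfl⟩ := hsurj y
      beta_reduce
      rw [← map_add, compat, Ring.add_choose_eq n (Commute.all _ _), map_sum]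
      exact Finset.sum_congr rfl fun ij _ => by rw [map_mul, compat, compat]
    · -- axiom II
      intro x y n
      obtain ⟨a, rfl⟩ := hsurj x
      obtain ⟨b, rfl⟩ := hsurj y
      beta_reduce
      rw [← map_mul, compat, QuotBinomAux.axII a b n, QuotBinomAux.rhsII, map_sum]
      refine Finset.sum_congr rfl fun m _ => ?_
      rw [map_mul, compat, map_sum]
      refine congrArg _ (Finset.sum_congr rfl fun q _ => ?_)
      rw [map_prod]
      exact Finset.prod_congr rfl fun i _ => (compat b (q i)).symm
    · -- axiom III
      intro x m n
      obtain ⟨a, rfl⟩ := hsurj x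
      beta_reduce
      rw [compat, compat, ← map_mul, QuotBinomAux.axIII a m n, map_sum]
      refine Finset.sum_congr rfl fun k _ => ?_
      rw [map_mul, map_mul, compat, map_natCast, map_natCast]
    · -- axiom IV
      intro n hn
      beta_reduce
      have h1 : (1 : R ⧸ I) = mkI 1 := (map_one mkI).symm
      rw [h1, compat, show (1 : R) = ((1 : ℕ) : R) by simp, Ring.choose_natCast,
        Nat.choose_eq_zero_of_lt (by omega), Nat.cast_zero, map_zero]
    · -- axiom V0
      intro x
      obtain ⟨a, rfl⟩ := hsurj x
      beta_reduce
      rw [compat, Ring.choose_zero_right, map_one]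
    · -- axiom V1
      intro x
      obtain ⟨a, rfl⟩ := hsurj x
      beta_reduce
      rw [compat, Ring.choose_one_right]
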